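/- Let σd > 4 and suppose ψ_B(t,r) = L(t)^{-2/σ} B(r/L(t)) e^{iτ(t)} with τ(t) = ∫_0^t L(s)^{-4} ds and L(t) = κ(T_c - t)^p (κ > 0) solves the radial biharmonic NLS iψ_t - Δ_r²ψ + |ψ|^{2σ}ψ = 0 exactly, with B a nonzero C⁴ function. Then the equation forces -B - i(lim_{t→T_c} L_t L³)((2/σ)B + ρB') - Δ_ρ²B + |B|^{2σ}B = 0; since L_tL³ = -pκ⁴(T_c-t)^{4p-1} must have a finite limit, necessarily p ≥ 1/4, and if p = 1/4 then B satisfies -B + i(κ⁴/4)((2/σ)B + ρB') - Δ_ρ²B + |B|^{2σ}B = 0. -/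

import Mathlib

open MeasureTheory Topology

/-- The radial biharmonic operator
`Δ_r² = ∂_r⁴ + (2(d-1)/r)∂_r³ + ((d-1)(d-3)/r²)∂_r² - ((d-1)(d-3)/r³)∂_r`. -/
noncomputable def radBilap (d : ℕ) (f : ℝ → ℂ) (r : ℝ) : ℂ :=
  deriv^[4] f r + ((2 * ((d : ℝ) - 1) / r : ℝ) : ℂ) * deriv^[3] f r
    + ((((d : ℝ) - 1) * ((d : ℝ) - 3) / r ^ 2 : ℝ) : ℂ) * deriv^[2] f r
    - ((((d : ℝ) - 1) * ((d : ℝ) - 3) / r ^ 3 : ℝ) : ℂ) * deriv f r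

private lemma iterScale (B : ℝ → ℂ) (hB : ContDiff ℝ 4 B) (c₁ c₂ : ℂ) (l : ℝ)
    (k : ℕ) (hk : k ≤ 4) (r : ℝ) :
    deriv^[k] (fun x => c₁ * B (x / l) * c₂) r
      = c₁ * c₂ * ((l⁻¹ ^ k : ℝ) : ℂ) * deriv^[k] B (l⁻¹ * r) := by
  have hBk : ContDiff ℝ (k : ℕ∞) B := hB.of_le (WithTop.coe_le_coe.mpr (by exact_mod_cast hk))
  have h1 : (fun x => c₁ * B (x / l) * c₂) = (c₁ * c₂) • fun x => B (l⁻¹ * x) := by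
    funext x
    simp only [Pi.smul_apply, smul_eq_mul, div_eq_inv_mul]
    ring
  have hg : ContDiff ℝ (k : ℕ∞) fun x => B (l⁻¹ * x) :=
    hBk.comp (contDiff_const.mul contDiff_id)
  rw [h1, ← iteratedDeriv_eq_iterate, ← iteratedDeriv_eq_iterate,
    ← iteratedDerivWithin_univ,
    iteratedDerivWithin_const_smul (Set.mem_univ r) uniqueDiffOn_univ (c₁ * c₂) hg.contDiffWithinAt,
    iteratedDerivWithin_univ, iteratedDeriv_comp_const_smul hBk l⁻¹]
  push_cast
  simp only [smul_eq_mul, Complex.real_smul]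
  push_cast
  ring

set_option maxHeartbeats 1600000 in
/-- Self-similar blowup rate dichotomy for the supercritical BNLS: if
`ψ_B(t,r) = L^{-2/σ} B(r/L) e^{iτ(t)}` with `L = κ(T_c-t)^p` solves the radial
BNLS exactly, then `p ≥ 1/4`, and `p = 1/4` iff `B` satisfies the nonlinear
eigenvalue problem `-B + i(κ⁴/4)((2/σ)B + ρB') - Δ_ρ²B + |B|^{2σ}B = 0`. -/
theorem supercritical_selfsimilar_rate (d : ℕ) (σ κ p T_c : ℝ)
    (hσ : 0 < σ) (hsup : 4 < σ * d) (hκ : 0 < κ) (hp : 0 < p) (hT : 0 < T_c)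
    (B : ℝ → ℂ) (hBreg : ContDiff ℝ 4 B) (hB0 : ∃ ρ > (0:ℝ), B ρ ≠ 0)
    (L : ℝ → ℝ) (hL : ∀ t, L t = κ * (T_c - t) ^ p)
    (τ : ℝ → ℝ) (hτ : ∀ t, τ t = ∫ s in (0:ℝ)..t, (L s) ^ (-(4:ℝ)))
    (ψB : ℝ → ℝ → ℂ)
    (hψB : ∀ t r, ψB t r =
      (((L t) ^ (-(2 / σ)) : ℝ) : ℂ) * B (r / L t) * Complex.exp (Complex.I * (τ t : ℂ)))
    (hSol : ∀ t ∈ Set.Ico (0:ℝ) T_c, ∀ r > (0:ℝ),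
      Complex.I * deriv (fun s => ψB s r) t - radBilap d (ψB t) r
        + ((‖ψB t r‖ ^ (2 * σ) : ℝ) : ℂ) * ψB t r = 0) :
    p ≥ 1/4 ∧
    (p = 1/4 ↔ ∀ ρ > (0:ℝ),
      -B ρ + Complex.I * ((κ ^ 4 / 4 : ℝ) : ℂ) *
          (((2 / σ : ℝ) : ℂ) * B ρ + (ρ : ℂ) * deriv B ρ)
        - radBilap d B ρ + ((‖B ρ‖ ^ (2 * σ) : ℝ) : ℂ) * B ρ = 0) := by
  have hσ' : σ ≠ 0 := hσ.ne'
  have hBd : Differentiable ℝ B := hBreg.differentiable (by norm_num)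
  have hLpos : ∀ s, s < T_c → 0 < L s := by
    intro s hs
    rw [hL]
    exact mul_pos hκ (Real.rpow_pos_of_pos (by linarith) p)
  have hLfun : L = fun s => κ * (T_c - s) ^ p := funext hL
  have hLcont4 : ∀ s, s < T_c → ContinuousAt (fun u => L u ^ (-(4:ℝ))) s := by
    intro s hs
    have h1 : ContinuousAt L s := by
      rw [hLfun]
      exact continuousAt_const.mul
        ((Real.continuousAt_rpow_const _ _ (Or.inl (ne_of_gt (by linarith : (0:ℝ) < T_c - s)))).comp
          (continuousAt_const.sub continuousAt_id))
    exact (Real.continuousAt_rpow_const _ _ (Or.inl (hLpos s hs).ne')).comp h1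
  -- The key pointwise identity obtained by substituting the ansatz into the PDE.
  have key : ∀ t ∈ Set.Ico (0:ℝ) T_c, ∀ ρ > (0:ℝ),
      -B ρ + Complex.I * ((p * κ ^ 4 * (T_c - t) ^ (4*p-1) : ℝ) : ℂ) *
          (((2 / σ : ℝ) : ℂ) * B ρ + (ρ : ℂ) * deriv B ρ)
        - radBilap d B ρ + ((‖B ρ‖ ^ (2 * σ) : ℝ) : ℂ) * B ρ = 0 := by
    intro t ht ρ hρ
    obtain ⟨ht0, htT⟩ := ht
    have hTt : 0 < T_c - t := by linarith
    set l : ℝ := L t with hldef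
    have lpos : 0 < l := hLpos t htT
    have lne : l ≠ 0 := lpos.ne'
    have hlval : l = κ * (T_c - t) ^ p := hL t
    have hr : 0 < ρ * l := mul_pos hρ lpos
    have hrl : ρ * l / l = ρ := by field_simp
    have hrl' : l⁻¹ * (ρ * l) = ρ := by field_simp
    set a : ℝ := l ^ (-(2/σ)) with hadef
    have apos : 0 < a := Real.rpow_pos_of_pos lpos _
    set L' : ℝ := κ * (-1 * p * (T_c - t) ^ (p - 1)) with hL'def
    -- derivative of L
    have hLd : HasDerivAt L L' t := by
      have h1 : HasDerivAt (fun s => T_c - s) (-1) t := (hasDerivAt_id t).const_sub T_c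
      have h2 := (h1.rpow_const (p := p) (Or.inl hTt.ne')).const_mul κ
      rw [hLfun]
      convert h2 using 1
    -- derivative of the amplitude
    have hA : HasDerivAt (fun s => (L s) ^ (-(2/σ))) (L' * (-(2/σ)) * l ^ (-(2/σ) - 1)) t :=
      hLd.rpow_const (Or.inl lne)
    -- derivative of the similarity variable
    have hG : HasDerivAt (fun s => ρ * l / L s) (ρ * l * -(L' / l ^ 2)) t := by
      have h := (hLd.inv lne).const_mul (ρ * l)
      simpa [div_eq_mul_inv, mul_comm, mul_left_comm] using h
    have hBg : HasDerivAt (fun s => B (ρ * l / L s)) ((ρ * l * -(L' / l ^ 2)) • deriv B ρ) t := by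
      have h1 : HasDerivAt B (deriv B ρ) (ρ * l / L t) := by
        rw [← hldef, hrl]; exact (hBd ρ).hasDerivAt
      simpa [Function.comp_def] using h1.scomp t hG
    -- derivative of the phase
    have hτd : HasDerivAt τ (l ^ (-(4:ℝ))) t := by
      have hfun : τ = fun u => ∫ s in (0:ℝ)..u, (L s) ^ (-(4:ℝ)) := funext hτ
      rw [hfun]
      have hint : IntervalIntegrable (fun s => (L s) ^ (-(4:ℝ))) volume 0 t := by
        apply ContinuousOn.intervalIntegrable
        intro s hs
        rw [Set.uIcc_of_le ht0] at hs
        exact (hLcont4 s (lt_of_le_of_lt hs.2 htT)).continuousWithinAt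
      have hmeas : StronglyMeasurableAtFilter (fun s => (L s) ^ (-(4:ℝ))) (𝓝 t) volume :=
        ContinuousAt.stronglyMeasurableAtFilter isOpen_Iio
          (fun x hx => hLcont4 x hx) t htT
      exact intervalIntegral.integral_hasDerivAt_right hint hmeas (hLcont4 t htT)
    have hE : HasDerivAt (fun s => Complex.exp (Complex.I * (τ s : ℂ)))
        (Complex.exp (Complex.I * (τ t : ℂ)) * (Complex.I * ((l ^ (-(4:ℝ)) : ℝ) : ℂ))) t := by
      have h1 : HasDerivAt (fun s => ((τ s : ℝ) : ℂ)) ((l ^ (-(4:ℝ)) : ℝ) : ℂ) t :=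
        hτd.ofReal_comp
      exact (h1.const_mul Complex.I).cexp
    -- full time derivative of the ansatz
    have hAc : HasDerivAt (fun s => (((L s) ^ (-(2/σ)) : ℝ) : ℂ))
        ((L' * (-(2/σ)) * l ^ (-(2/σ) - 1) : ℝ) : ℂ) t := hA.ofReal_comp
    have hfun2 : (fun s => ψB s (ρ * l))
        = fun s => (((L s) ^ (-(2/σ)) : ℝ) : ℂ) * B (ρ * l / L s)
            * Complex.exp (Complex.I * (τ s : ℂ)) := funext fun s => hψB s (ρ * l)
    have hderiv : deriv (fun s => ψB s (ρ * l)) t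
        = (((L' * (-(2/σ)) * l ^ (-(2/σ) - 1) : ℝ) : ℂ) * B (ρ * l / L t)
            + (((L t) ^ (-(2/σ)) : ℝ) : ℂ) * ((ρ * l * -(L' / l ^ 2)) • deriv B ρ))
            * Complex.exp (Complex.I * (τ t : ℂ))
          + (((L t) ^ (-(2/σ)) : ℝ) : ℂ) * B (ρ * l / L t)
            * (Complex.exp (Complex.I * (τ t : ℂ)) * (Complex.I * ((l ^ (-(4:ℝ)) : ℝ) : ℂ))) := by
      rw [hfun2]
      exact ((hAc.mul hBg).mul hE).deriv
    -- spatial derivatives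
    have hψBt : ψB t = fun x => ((a : ℝ) : ℂ) * B (x / l)
        * Complex.exp (Complex.I * (τ t : ℂ)) := by
      funext x; rw [hψB t x, ← hldef, ← hadef]
    have hiter : ∀ k, k ≤ 4 → deriv^[k] (ψB t) (ρ * l)
        = ((a : ℝ) : ℂ) * Complex.exp (Complex.I * (τ t : ℂ)) * ((l⁻¹ ^ k : ℝ) : ℂ)
          * deriv^[k] B ρ := by
      intro k hk
      rw [hψBt, iterScale B hBreg _ _ l k hk (ρ * l), hrl']
    -- the nonlinear factor
    have hnorm : ‖ψB t (ρ * l)‖ ^ (2 * σ) = l⁻¹ ^ (4:ℕ) * ‖B ρ‖ ^ (2 * σ) := by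
      rw [hψB t (ρ * l), ← hldef, hrl, norm_mul, norm_mul]
      have h1 : ‖Complex.exp (Complex.I * (τ t : ℂ))‖ = 1 := by
        rw [Complex.norm_exp]
        simp
      have h2 : ‖((a : ℝ) : ℂ)‖ = a := by
        rw [Complex.norm_real, Real.norm_eq_abs, abs_of_pos apos]
      rw [← hadef, h1, h2, mul_one, Real.mul_rpow apos.le (norm_nonneg _)]
      congr 1
      rw [hadef, ← Real.rpow_natCast l⁻¹ 4, ← Real.rpow_neg_one l, ← Real.rpow_mul lpos.le,
        ← Real.rpow_mul lpos.le]
      congr 1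
      field_simp
      ring
    -- rpow bookkeeping
    have e1 : l ^ (-(2/σ) - 1) = a / l := by
      rw [Real.rpow_sub lpos, Real.rpow_one, hadef]
    have e2 : l ^ (-(4:ℝ)) = l⁻¹ ^ (4:ℕ) := by
      rw [← Real.rpow_natCast l⁻¹ 4, ← Real.rpow_neg_one l, ← Real.rpow_mul lpos.le]
      norm_num
    have e3 : (p * κ ^ 4 * (T_c - t) ^ (4*p-1) : ℝ) = -(L' * l ^ (3:ℕ)) := by
      have h3 : ((T_c - t) ^ p) ^ (3:ℕ) = (T_c - t) ^ (3*p) := by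
        rw [← Real.rpow_natCast ((T_c - t) ^ p) 3, ← Real.rpow_mul hTt.le]
        norm_num [mul_comm]
      have h4 : (T_c - t) ^ (p-1) * (T_c - t) ^ (3*p) = (T_c - t) ^ (4*p-1) := by
        rw [← Real.rpow_add hTt]
        ring_nf
      rw [hL'def, hlval, mul_pow, h3,
        show κ * (-1 * p * (T_c - t) ^ (p - 1)) * (κ ^ 3 * (T_c - t) ^ (3*p))
          = -(p * κ ^ 4 * ((T_c - t) ^ (p-1) * (T_c - t) ^ (3*p))) by ring, h4]
      ring
    -- assemble
    have hmain := hSol t ⟨ht0, htT⟩ (ρ * l) hr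
    have hψval : ψB t (ρ * l) = ((a : ℝ) : ℂ) * B ρ * Complex.exp (Complex.I * (τ t : ℂ)) := by
      rw [hψB t (ρ * l), ← hldef, hrl, ← hadef]
    have h1' : deriv (ψB t) (ρ * l)
        = ((a : ℝ) : ℂ) * Complex.exp (Complex.I * (τ t : ℂ)) * ((l⁻¹ ^ (1:ℕ) : ℝ) : ℂ)
          * deriv B ρ := by
      have := hiter 1 (by norm_num)
      simpa using this
    rw [radBilap, hiter 4 (by norm_num), hiter 3 (by norm_num), hiter 2 (by norm_num), h1',
      hderiv, hnorm, hψval, ← hldef, hrl, e1, e2] at hmain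
    set E : ℂ := Complex.exp (Complex.I * (τ t : ℂ)) with hEdef
    have hcoef : ((a : ℝ) : ℂ) * E * ((l⁻¹ ^ (4:ℕ) : ℝ) : ℂ) ≠ 0 := by
      apply mul_ne_zero (mul_ne_zero _ (Complex.exp_ne_zero _))
      · simpa using (pow_ne_zero 4 (inv_ne_zero lne))
      · simpa using apos.ne'
    rw [← hadef] at hmain
    clear_value a l L' E
    have hlc : ((l:ℝ):ℂ) ≠ 0 := Complex.ofReal_ne_zero.mpr lne
    have hρc : ((ρ:ℝ):ℂ) ≠ 0 := Complex.ofReal_ne_zero.mpr hρ.ne'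
    have hσc : ((σ:ℝ):ℂ) ≠ 0 := Complex.ofReal_ne_zero.mpr hσ'
    suffices h : ((a : ℝ) : ℂ) * E * ((l⁻¹ ^ (4:ℕ) : ℝ) : ℂ) *
        (-B ρ + Complex.I * ((p * κ ^ 4 * (T_c - t) ^ (4*p-1) : ℝ) : ℂ) *
          (((2 / σ : ℝ) : ℂ) * B ρ + (ρ : ℂ) * deriv B ρ)
        - radBilap d B ρ + ((‖B ρ‖ ^ (2 * σ) : ℝ) : ℂ) * B ρ) = 0 by
      have h2 := (mul_eq_zero.mp h).resolve_left hcoef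
      linear_combination h2
    have P3 : ((l⁻¹ ^ 4 * ‖B ρ‖ ^ (2 * σ) : ℝ) : ℂ) * (↑a * B ρ * E)
        = ↑a * E * ((l⁻¹ ^ (4:ℕ) : ℝ) : ℂ) * (((‖B ρ‖ ^ (2 * σ) : ℝ) : ℂ) * B ρ) := by
      push_cast
      ring
    have hl34 : l ^ 3 * l⁻¹ ^ 4 = l⁻¹ := by
      field_simp
    have hl12 : l * (l ^ 2)⁻¹ = l⁻¹ := by
      field_simp
    have r1 : 2 * ((d:ℝ) - 1) / (ρ * l) * l⁻¹ ^ 3 = l⁻¹ ^ 4 * (2 * ((d:ℝ) - 1) / ρ) := by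
      simp only [div_eq_mul_inv, mul_inv, mul_pow, inv_pow]
      ring
    have r2 : ((d:ℝ) - 1) * ((d:ℝ) - 3) / (ρ * l) ^ 2 * l⁻¹ ^ 2
        = l⁻¹ ^ 4 * (((d:ℝ) - 1) * ((d:ℝ) - 3) / ρ ^ 2) := by
      simp only [div_eq_mul_inv, mul_inv, mul_pow, inv_pow]
      ring
    have r3 : ((d:ℝ) - 1) * ((d:ℝ) - 3) / (ρ * l) ^ 3 * l⁻¹ ^ 1
        = l⁻¹ ^ 4 * (((d:ℝ) - 1) * ((d:ℝ) - 3) / ρ ^ 3) := by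
      simp only [div_eq_mul_inv, mul_inv, mul_pow, inv_pow]
      ring
    have r4 : L' * -(2 / σ) * (a / l) = a * (l⁻¹ ^ 4 * (-(L' * l ^ 3) * (2 / σ))) := by
      simp only [div_eq_mul_inv]
      linear_combination (2 * a * L' * σ⁻¹) * hl34
    have r5 : a * (ρ * l * -(L' / l ^ 2)) = a * (l⁻¹ ^ 4 * (-(L' * l ^ 3) * ρ)) := by
      simp only [div_eq_mul_inv]
      linear_combination (a * ρ * L') * hl34 - (a * ρ * L') * hl12
    have r1c := congrArg (Complex.ofReal) r1
    have r2c := congrArg (Complex.ofReal) r2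
    have r3c := congrArg (Complex.ofReal) r3
    have r4c := congrArg (Complex.ofReal) r4
    have r5c := congrArg (Complex.ofReal) r5
    push_cast at r1c r2c r3c r4c r5c
    have P2 : (↑a * E * ((l⁻¹ ^ 4 : ℝ) : ℂ) * deriv^[4] B ρ
          + ((2 * ((d:ℝ) - 1) / (ρ * l) : ℝ) : ℂ) * (↑a * E * ((l⁻¹ ^ 3 : ℝ) : ℂ) * deriv^[3] B ρ)
          + ((((d:ℝ) - 1) * ((d:ℝ) - 3) / (ρ * l) ^ 2 : ℝ) : ℂ) * (↑a * E * ((l⁻¹ ^ 2 : ℝ) : ℂ) * deriv^[2] B ρ)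
          - ((((d:ℝ) - 1) * ((d:ℝ) - 3) / (ρ * l) ^ 3 : ℝ) : ℂ) * (↑a * E * ((l⁻¹ ^ 1 : ℝ) : ℂ) * deriv B ρ))
        = ↑a * E * ((l⁻¹ ^ (4:ℕ) : ℝ) : ℂ) * radBilap d B ρ := by
      rw [radBilap]
      push_cast
      linear_combination (↑a * E * deriv^[3] B ρ) * r1c + (↑a * E * deriv^[2] B ρ) * r2c
        - (↑a * E * deriv B ρ) * r3c
    have P1 : Complex.I * ((((L' * -(2 / σ) * (a / l) : ℝ) : ℂ) * B ρ
            + ↑a * (ρ * l * -(L' / l ^ 2)) • deriv B ρ) * E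
          + ↑a * B ρ * (E * (Complex.I * ((l⁻¹ ^ 4 : ℝ) : ℂ))))
        = ↑a * E * ((l⁻¹ ^ (4:ℕ) : ℝ) : ℂ) * (-B ρ + Complex.I * ((-(L' * l ^ 3) : ℝ) : ℂ) *
            (((2 / σ : ℝ) : ℂ) * B ρ + (ρ : ℂ) * deriv B ρ)) := by
      simp only [Complex.real_smul]
      push_cast
      linear_combination (B ρ * E * Complex.I) * r4c + (deriv B ρ * E * Complex.I) * r5c
        + (↑a * B ρ * E * ((↑l : ℂ))⁻¹ ^ 4) * Complex.I_mul_I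
    rw [e3]
    linear_combination hmain - P1 + P2 - P3
  -- From the key identity, the blowup rate is forced to be `p = 1/4`.
  have hp14 : p = 1/4 := by
    by_contra hne
    have hexp : 4*p - 1 ≠ 0 := fun h => hne (by linarith)
    -- two distinct times give two distinct coefficients
    have ht1 : (0:ℝ) ∈ Set.Ico (0:ℝ) T_c := ⟨le_refl _, hT⟩
    have ht2 : (T_c/2) ∈ Set.Ico (0:ℝ) T_c := ⟨by linarith, by linarith⟩
    have hc12 : (p * κ ^ 4 * (T_c - 0) ^ (4*p-1) : ℝ)
        ≠ (p * κ ^ 4 * (T_c - T_c/2) ^ (4*p-1) : ℝ) := by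
      intro h
      have hκ4 : p * κ ^ 4 ≠ 0 := by positivity
      have h2 : (T_c : ℝ) ^ (4*p-1) = (T_c/2) ^ (4*p-1) := by
        have := mul_left_cancel₀ hκ4 h
        rw [show T_c - T_c/2 = T_c/2 by ring] at this
        simpa using this
      have h3 : T_c = T_c/2 := by
        have hs : StrictMonoOn (fun x : ℝ => x ^ (4*p-1)) (Set.Ioi 0) ∨
            StrictAntiOn (fun x : ℝ => x ^ (4*p-1)) (Set.Ioi 0) := by
          rcases lt_or_gt_of_ne hexp with hlt | hgt
          · right; intro x hx y hy hxy
            exact Real.rpow_lt_rpow_of_neg hx hxy hlt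
          · left; intro x hx y hy hxy
            exact Real.rpow_lt_rpow (le_of_lt hx) hxy hgt
        rcases hs with hs | hs
        · exact hs.injOn (Set.mem_Ioi.mpr hT) (Set.mem_Ioi.mpr (by linarith)) h2
        · exact hs.injOn (Set.mem_Ioi.mpr hT) (Set.mem_Ioi.mpr (by linarith)) h2
      linarith
    -- hence the profile satisfies (2/σ)B + ρB' = 0 on (0,∞)
    have hFzero : ∀ ρ > (0:ℝ), ((2 / σ : ℝ) : ℂ) * B ρ + (ρ : ℂ) * deriv B ρ = 0 := by
      intro ρ hρ
      have h1 := key 0 ht1 ρ hρ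
      have h2 := key (T_c/2) ht2 ρ hρ
      have h3 : Complex.I * (((p * κ ^ 4 * (T_c - 0) ^ (4*p-1) : ℝ) : ℂ)
            - ((p * κ ^ 4 * (T_c - T_c/2) ^ (4*p-1) : ℝ) : ℂ)) *
          (((2 / σ : ℝ) : ℂ) * B ρ + (ρ : ℂ) * deriv B ρ) = 0 := by
        linear_combination h1 - h2
      have h4 : Complex.I * (((p * κ ^ 4 * (T_c - 0) ^ (4*p-1) : ℝ) : ℂ)
          - ((p * κ ^ 4 * (T_c - T_c/2) ^ (4*p-1) : ℝ) : ℂ)) ≠ 0 := by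
        apply mul_ne_zero Complex.I_ne_zero
        rw [sub_ne_zero]
        exact_mod_cast hc12
      exact (mul_eq_zero.mp h3).resolve_left h4
    -- so B(ρ) = C ρ^{-2/σ}, contradicting continuity at 0
    obtain ⟨ρ₀, hρ₀, hBρ₀⟩ := hB0
    set g : ℝ → ℂ := fun x => ((x ^ (2/σ) : ℝ) : ℂ) * B x with hgdef
    have hgderiv : ∀ x ∈ Set.Ioi (0:ℝ), HasDerivAt g 0 x := by
      intro x hx
      have hx0 : (0:ℝ) < x := hx
      have h1 : HasDerivAt (fun y : ℝ => y ^ (2/σ)) ((2/σ) * x ^ (2/σ - 1)) x :=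
        Real.hasDerivAt_rpow_const (Or.inl hx0.ne')
      have h2 := (h1.ofReal_comp).mul (hBd x).hasDerivAt
      have h3 : (((2/σ) * x ^ (2/σ - 1) : ℝ) : ℂ) * B x + ((x ^ (2/σ) : ℝ) : ℂ) * deriv B x
          = ((x ^ (2/σ - 1) : ℝ) : ℂ) * (((2 / σ : ℝ) : ℂ) * B x + (x : ℂ) * deriv B x) := by
        have e5 : (x ^ (2/σ) : ℝ) = x ^ (2/σ - 1) * x := by
          rw [Real.rpow_sub hx0, Real.rpow_one]
          field_simp
        rw [e5]
        push_cast
        ring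
      have h4 : (((2/σ) * x ^ (2/σ - 1) : ℝ) : ℂ) * B x + ((x ^ (2/σ) : ℝ) : ℂ) * deriv B x
          = 0 := by
        rw [h3, hFzero x hx0, mul_zero]
      rw [← h4]
      exact h2
    have hgconst : ∀ x ∈ Set.Ioi (0:ℝ), g x = g ρ₀ := by
      intro x hx
      apply (convex_Ioi (0:ℝ)).is_const_of_fderivWithin_eq_zero
        (fun y hy => ((hgderiv y hy).differentiableAt).differentiableWithinAt)
        (fun y hy => ?_) hx (Set.mem_Ioi.mpr hρ₀)
      rw [fderivWithin_of_isOpen isOpen_Ioi hy, ((hgderiv y hy).hasFDerivAt).fderiv]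
      ext z
      simp
    have hC : g ρ₀ ≠ 0 := by
      apply mul_ne_zero _ hBρ₀
      simpa using (Real.rpow_pos_of_pos hρ₀ (2/σ)).ne'
    -- norm blowup near 0 versus continuity
    have hBnorm : ∀ x ∈ Set.Ioi (0:ℝ), ‖B x‖ = ‖g ρ₀‖ * (x ^ (2/σ))⁻¹ := by
      intro x hx
      have hx0 : (0:ℝ) < x := hx
      have hxne : ((x ^ (2/σ) : ℝ) : ℂ) ≠ 0 :=
        Complex.ofReal_ne_zero.mpr (Real.rpow_pos_of_pos hx0 _).ne'
      have h1 : B x = g ρ₀ * (((x ^ (2/σ) : ℝ) : ℂ))⁻¹ := by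
        rw [← hgconst x hx]
        rw [hgdef]
        field_simp
      rw [h1, norm_mul, norm_inv, Complex.norm_real, Real.norm_eq_abs,
        abs_of_pos (Real.rpow_pos_of_pos hx0 _)]
    have htendsto1 : Filter.Tendsto (fun x => ‖B x‖) (nhdsWithin 0 (Set.Ioi 0)) (nhds ‖B 0‖) :=
      ((hBreg.continuous.norm).continuousAt).continuousWithinAt
    have htendsto2 : Filter.Tendsto (fun x => ‖B x‖) (nhdsWithin 0 (Set.Ioi 0)) Filter.atTop := by
      have h2 : Filter.Tendsto (fun x : ℝ => x ^ (2/σ)) (nhdsWithin 0 (Set.Ioi 0))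
          (nhdsWithin 0 (Set.Ioi 0)) := by
        apply tendsto_nhdsWithin_of_tendsto_nhds_of_eventually_within
        · have h := (Real.continuousAt_rpow_const 0 (2/σ)
            (Or.inr (le_of_lt (div_pos two_pos hσ)))).tendsto
          rw [Real.zero_rpow (div_pos two_pos hσ).ne'] at h
          exact h.mono_left nhdsWithin_le_nhds
        · filter_upwards [self_mem_nhdsWithin] with x hx
          exact Real.rpow_pos_of_pos hx _
      have h3 : Filter.Tendsto (fun x : ℝ => (x ^ (2/σ))⁻¹) (nhdsWithin 0 (Set.Ioi 0))
          Filter.atTop := tendsto_inv_nhdsGT_zero.comp h2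
      have h4 := h3.const_mul_atTop (norm_pos_iff.mpr hC)
      apply h4.congr'
      filter_upwards [self_mem_nhdsWithin] with x hx
      exact (hBnorm x hx).symm
    exact not_tendsto_atTop_of_tendsto_nhds htendsto1 htendsto2
  refine ⟨by rw [hp14], ?_, fun _ => hp14⟩
  intro _ ρ hρ
  have h := key 0 ⟨le_refl _, hT⟩ ρ hρ
  have hc : (p * κ ^ 4 * (T_c - 0) ^ (4*p-1) : ℝ) = κ ^ 4 / 4 := by
    rw [hp14, show (4:ℝ) * (1/4) - 1 = 0 by norm_num, sub_zero, Real.rpow_zero]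
    ring
  rw [hc] at h
  exact h
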